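/- A family 𝒯 of complete theories of a relational language L contains an approximating subfamily — i.e., there exist 𝒯' ⊆ 𝒯 and a complete theory T that is 𝒯'-approximated — if and only if 𝒯 is infinite. -/

import Mathlib

open FirstOrder Language Set

universe u v

namespace Approx

variable {L : FirstOrder.Language.{u, v}}

/-- A complete theory: a satisfiable set of sentences deciding every sentence. -/
def CompleteTheory (T : L.Theory) : Prop :=
  T.IsSatisfiable ∧ ∀ φ : L.Sentence, φ ∈ T ∨ φ.not ∈ T

/-- `T` is `𝒯`-approximated: `T ∉ 𝒯` and every sentence of `T` lies in some member of `𝒯`. -/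
def Approximated (𝒯 : Set L.Theory) (T : L.Theory) : Prop :=
  T ∉ 𝒯 ∧ ∀ φ ∈ T, ∃ T' ∈ 𝒯, φ ∈ T'

/-- The `φ`-neighbourhood `𝒯_φ` of a family of theories. -/
def Nbhd (𝒯 : Set L.Theory) (φ : L.Sentence) : Set L.Theory :=
  {T' ∈ 𝒯 | φ ∈ T'}

/-- An accumulation point of `𝒯`: a complete theory each of whose sentences has an
infinite neighbourhood in `𝒯`. -/
def AccPoint (𝒯 : Set L.Theory) (T : L.Theory) : Prop :=
  CompleteTheory T ∧ ∀ φ ∈ T, (Nbhd 𝒯 φ).Infinite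

/-- The `E`-closure of `𝒯`: `𝒯` together with all its accumulation points. -/
def ClE (𝒯 : Set L.Theory) : Set L.Theory :=
  𝒯 ∪ {T | AccPoint 𝒯 T}

section Helpers

lemma not_both {S : L.Theory} (hS : S.IsSatisfiable) {ψ : L.Sentence}
    (h1 : ψ ∈ S) (h2 : ψ.not ∈ S) : False := by
  obtain ⟨M⟩ := hS
  have r1 : M ⊨ ψ := Theory.realize_sentence_of_mem S h1
  have r2 : M ⊨ ψ.not := Theory.realize_sentence_of_mem S h2
  rw [Sentence.realize_not] at r2
  exact r2 r1

lemma not_mem_iff {S : L.Theory} (hS : CompleteTheory S) (ψ : L.Sentence) :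
    ψ ∉ S ↔ ψ.not ∈ S :=
  ⟨fun h => (hS.2 ψ).resolve_left h, fun h h' => not_both hS.1 h' h⟩

lemma mem_of_models {S : L.Theory} (hS : CompleteTheory S) {ψ : L.Sentence}
    (h : ∀ M : Theory.ModelType.{u, v, max u v} S, M ⊨ ψ) : ψ ∈ S := by
  by_contra hn
  rw [not_mem_iff hS] at hn
  obtain ⟨M⟩ := hS.1
  have := h M
  have r2 : M ⊨ ψ.not := Theory.realize_sentence_of_mem S hn
  rw [Sentence.realize_not] at r2
  exact r2 this

lemma top_mem {S : L.Theory} (hS : CompleteTheory S) : (⊤ : L.Sentence) ∈ S := by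
  refine mem_of_models hS fun M => ?_
  exact BoundedFormula.realize_top.2 trivial

lemma inf_mem {S : L.Theory} (hS : CompleteTheory S) {φ ψ : L.Sentence}
    (h1 : φ ∈ S) (h2 : ψ ∈ S) : φ ⊓ ψ ∈ S := by
  refine mem_of_models hS fun M => ?_
  have r1 : M ⊨ φ := Theory.realize_sentence_of_mem S h1
  have r2 : M ⊨ ψ := Theory.realize_sentence_of_mem S h2
  exact Formula.realize_inf.2 ⟨r1, r2⟩

lemma mem_left_of_inf_mem {S : L.Theory} (hS : CompleteTheory S) {φ ψ : L.Sentence}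
    (h : φ ⊓ ψ ∈ S) : φ ∈ S := by
  refine mem_of_models hS fun M => ?_
  exact (Formula.realize_inf.1 (Theory.realize_sentence_of_mem S h)).1

lemma mem_right_of_inf_mem {S : L.Theory} (hS : CompleteTheory S) {φ ψ : L.Sentence}
    (h : φ ⊓ ψ ∈ S) : ψ ∈ S := by
  refine mem_of_models hS fun M => ?_
  exact (Formula.realize_inf.1 (Theory.realize_sentence_of_mem S h)).2

end Helpers

/-- a family `𝒯` of complete theories of a relational language contains an
approximating subfamily iff `𝒯` is infinite. -/
theorem exists_approximating_subfamily_iff_infinite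
    {L : FirstOrder.Language.{u, v}} [L.IsRelational]
    (𝒯 : Set L.Theory) (h𝒯 : ∀ S ∈ 𝒯, CompleteTheory S) :
    (∃ 𝒯' ⊆ 𝒯, ∃ T : L.Theory, CompleteTheory T ∧ Approximated 𝒯' T) ↔ 𝒯.Infinite := by
  constructor
  · rintro ⟨𝒯', h𝒯', T, hT, hTnot, happrox⟩
    by_contra hfin
    rw [Set.not_infinite] at hfin
    have h𝒯'fin : 𝒯'.Finite := hfin.subset h𝒯'
    have key : ∀ S ∈ 𝒯', ∃ ψ, ψ ∈ T ∧ ψ ∉ S := by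
      intro S hS
      have hSc : CompleteTheory S := h𝒯 S (h𝒯' hS)
      have hne : T ≠ S := fun h => hTnot (h ▸ hS)
      by_contra hcon
      push_neg at hcon
      apply hne
      apply Set.Subset.antisymm hcon
      intro φ hφ
      by_contra hφT
      rw [not_mem_iff hT] at hφT
      exact not_both hSc.1 hφ (hcon _ hφT)
    -- build a sentence in T not in any member of 𝒯'
    have main : ∃ χ, χ ∈ T ∧ ∀ S ∈ 𝒯', χ ∉ S := by
      refine Set.Finite.induction_on_subset (motive := fun A _ => ∃ χ, χ ∈ T ∧ ∀ S ∈ A, χ ∉ S) 𝒯' h𝒯'fin ⟨⊤, top_mem hT, by simp⟩ ?_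
      rintro S A hS𝒯' hA𝒯' hSA ⟨χ, hχT, hχ⟩
      obtain ⟨ψ, hψT, hψS⟩ := key S hS𝒯'
      refine ⟨χ ⊓ ψ, inf_mem hT hχT hψT, ?_⟩
      rintro S' (rfl | hS'A)
      · intro hmem
        exact hψS (mem_right_of_inf_mem (h𝒯 S' (h𝒯' hS𝒯')) hmem)
      · intro hmem
        exact hχ S' hS'A (mem_left_of_inf_mem (h𝒯 S' (h𝒯' (hA𝒯' hS'A))) hmem)
    obtain ⟨χ, hχT, hχ⟩ := main
    obtain ⟨S, hS, hχS⟩ := happrox χ hχT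
    exact hχ S hS hχS
  · intro hinf
    haveI : Infinite ↥𝒯 := Set.infinite_coe_iff.2 hinf
    haveI : (Filter.cofinite : Filter ↥𝒯).NeBot := Filter.cofinite_neBot
    let U : Ultrafilter ↥𝒯 := Ultrafilter.of Filter.cofinite
    have hUc : (U : Filter ↥𝒯) ≤ Filter.cofinite := Ultrafilter.of_le _
    set T : L.Theory := {φ | {S : ↥𝒯 | φ ∈ (S : L.Theory)} ∈ U} with hTdef
    -- every U-large set of indices is infinite
    have hlarge : ∀ A : Set ↥𝒯, A ∈ U → A.Infinite := by
      intro A hA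
      by_contra hfin
      rw [Set.not_infinite] at hfin
      have : Aᶜ ∈ U := hUc hfin.compl_mem_cofinite
      have : A ∩ Aᶜ ∈ U := Filter.inter_mem hA this
      simp at this
    have hTcomplete : CompleteTheory T := by
      constructor
      · rw [Theory.isSatisfiable_iff_isFinitelySatisfiable]
        intro T0 hT0
        have hmem : {S : ↥𝒯 | ∀ φ ∈ T0, φ ∈ (S : L.Theory)} ∈ U := by
          have : {S : ↥𝒯 | ∀ φ ∈ T0, φ ∈ (S : L.Theory)} =
              ⋂ φ ∈ T0, {S : ↥𝒯 | φ ∈ (S : L.Theory)} := by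
            ext S; simp
          rw [this]
          refine (Filter.biInter_mem T0.finite_toSet).2 fun φ hφ => ?_
          exact hT0 hφ
        obtain ⟨S, hS⟩ := (hlarge _ hmem).nonempty
        exact ((h𝒯 S S.2).1).mono fun φ hφ => hS φ hφ
      · intro φ
        by_cases h : {S : ↥𝒯 | φ ∈ (S : L.Theory)} ∈ U
        · exact Or.inl h
        · right
          rw [← Ultrafilter.compl_mem_iff_notMem] at h
          refine Filter.mem_of_superset h ?_
          intro S hS
          exact ((h𝒯 S S.2).2 φ).resolve_left hS
    -- each φ ∈ T has infinite Nbhd in 𝒯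
    have hNbhd : ∀ φ ∈ T, (Nbhd 𝒯 φ).Infinite := by
      intro φ hφ
      have := hlarge _ hφ
      have himg : Subtype.val '' {S : ↥𝒯 | φ ∈ (S : L.Theory)} ⊆ Nbhd 𝒯 φ := by
        rintro _ ⟨S, hS, rfl⟩
        exact ⟨S.2, hS⟩
      exact (this.image (Set.injOn_of_injective Subtype.val_injective)).mono himg
    refine ⟨𝒯 \ {T}, Set.diff_subset, T, hTcomplete, fun h => h.2 rfl, ?_⟩
    intro φ hφ
    obtain ⟨T', hT'⟩ := ((hNbhd φ hφ).diff (Set.finite_singleton T)).nonempty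
    exact ⟨T', ⟨hT'.1.1, hT'.2⟩, hT'.1.2⟩


end Approx
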